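/- Fix λ > 0 and p < 1. The third derivative of the induced p-shrinkage penalty component g_p exists at every nonzero point, and satisfies g_p'''(w) > 0 for all w > 0 and g_p'''(w) < 0 for all w < 0; moreover the one-sided third derivatives at zero exist and satisfy g_p'''(0+) > 0 and g_p'''(0−) < 0. -/

import Mathlib

open MeasureTheory Filter
open scoped BigOperators

noncomputable section

/-- `l0 w` is the number of nonzero entries of `w`. -/
def l0 {n : ℕ} (w : Fin n → ℝ) : ℕ := (Finset.univ.filter fun i => w i ≠ 0).card

/-- Euclidean (`ℓ²`) norm of a vector. -/
def l2 {k : ℕ} (v : Fin k → ℝ) : ℝ := Real.sqrt (∑ i, v i ^ 2)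

/-- Restriction `h_T` of a vector to a finset `T` (zero outside `T`). -/
def restr {n : ℕ} (T : Finset (Fin n)) (h : Fin n → ℝ) : Fin n → ℝ :=
  fun i => if i ∈ T then h i else 0

/-- Unique Representation Property: every `m` columns of `A` are linearly independent. -/
def URP {m n : ℕ} (A : Matrix (Fin m) (Fin n) ℝ) : Prop :=
  ∀ S : Finset (Fin n), S.card = m →
    LinearIndependent ℝ (fun j : S => (fun i : Fin m => A i (j : Fin n)))

/-- Conditions (I)-(II) on the penalty component `g`. -/
def PenaltyConds (g : ℝ → ℝ) : Prop :=
  g 0 = 0 ∧ (∀ w, g (-w) = g w) ∧ Continuous g ∧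
    ((StrictMonoOn g (Set.Ioi 0) ∧ StrictConcaveOn ℝ (Set.Ioi 0) g) ∨
      (∃ γ : ℝ, 0 < γ ∧ StrictMonoOn g (Set.Ioc 0 γ) ∧
        StrictConcaveOn ℝ (Set.Ioc 0 γ) g ∧ ∀ w, γ ≤ w → g w = g γ))

/-- Spectral (`ℓ² → ℓ²` operator) norm of a matrix. -/
def specNorm {m n : ℕ} (A : Matrix (Fin m) (Fin n) ℝ) : ℝ :=
  sSup {c | ∃ v : Fin n → ℝ, l2 v ≤ 1 ∧ c = l2 (A.mulVec v)}

/-- The `p`-shrinkage function `s_{λ,p}`. -/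
def pshrinkFun (lam p t : ℝ) : ℝ :=
  if t ≤ 0 then 0 else max (t - lam ^ (2 - p) * t ^ (p - 1)) 0

/-- `f_p(x) = ∫₀ˣ s_{λ,p}(t) dt`. -/
def pf (lam p x : ℝ) : ℝ := ∫ t in (0 : ℝ)..x, pshrinkFun lam p t

/-- Legendre–Fenchel transform `f_p*(w) = sup_{x ≥ 0} (x·w − f_p(x))`. -/
def pfstar (lam p w : ℝ) : ℝ := sSup ((fun x => x * w - pf lam p x) '' Set.Ici 0)

/-- The induced `p`-shrinkage penalty component `g_p`. -/
def gp (lam p w : ℝ) : ℝ := (pfstar lam p |w| - w ^ 2 / 2) / lam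

/-- The induced `p`-shrinkage penalty `G_p`. -/
def Gp (lam p : ℝ) {n : ℕ} (w : Fin n → ℝ) : ℝ := ∑ i, gp lam p (w i)

/-- The `p`-shrinkage mapping `S_p`. -/
def Sp (lam p : ℝ) {n : ℕ} (x : Fin n → ℝ) : Fin n → ℝ :=
  fun i => pshrinkFun lam p |x i| * Real.sign (x i)

/-- The objective `F_p(x) = λ G_p(x) + ½‖Ax − b‖₂²`. -/
def Fp (lam p : ℝ) {m n : ℕ} (A : Matrix (Fin m) (Fin n) ℝ) (b : Fin m → ℝ)
    (x : Fin n → ℝ) : ℝ :=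
  lam * Gp lam p x + (1 / 2) * (l2 (A.mulVec x - b)) ^ 2

/-- Firm-thresholding penalty component. -/
def gfirm (μ w : ℝ) : ℝ := if |w| ≤ μ then |w| - w ^ 2 / (2 * μ) else μ / 2

/-- Firm-thresholding penalty. -/
def Gfirm (μ : ℝ) {n : ℕ} (w : Fin n → ℝ) : ℝ := ∑ i, gfirm μ (w i)

/-- The `m × m` submatrix `A_S` of the columns of `A` indexed by `S`. -/
def colsub {m n : ℕ} (A : Matrix (Fin m) (Fin n) ℝ)
    (S : {S : Finset (Fin n) // S.card = m}) : Matrix (Fin m) (Fin m) ℝ :=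
  Matrix.of fun i j => A i ((S.1.orderIsoOfFin S.2 j : Fin n))

/-- `α_S = ‖A_S⁻¹ b‖_{-∞}`. -/
def alphaS {m n : ℕ} (A : Matrix (Fin m) (Fin n) ℝ) (b : Fin m → ℝ)
    (S : {S : Finset (Fin n) // S.card = m}) : ℝ :=
  ⨅ i, |((colsub A S)⁻¹).mulVec b i|

/-- `β_S = ‖A_S⁻¹ b‖_∞`. -/
def betaS {m n : ℕ} (A : Matrix (Fin m) (Fin n) ℝ) (b : Fin m → ℝ)
    (S : {S : Finset (Fin n) // S.card = m}) : ℝ :=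
  ⨆ i, |((colsub A S)⁻¹).mulVec b i|

/-- `‖A_S⁻¹‖` (spectral norm). -/
def nrmInv {m n : ℕ} (A : Matrix (Fin m) (Fin n) ℝ)
    (S : {S : Finset (Fin n) // S.card = m}) : ℝ :=
  specNorm ((colsub A S)⁻¹)

namespace Stmt16Aux

/-- `h(x) = x - λ^{2-p} x^{p-1}`. -/
def hh (lam p x : ℝ) : ℝ := x - lam ^ (2 - p) * x ^ (p - 1)

/-- inverse of `hh` on `[λ, ∞)`. -/
def uu (lam p w : ℝ) : ℝ := sInf {x | lam ≤ x ∧ w ≤ hh lam p x}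

def DD (lam p w : ℝ) : ℝ := 1 - lam ^ (2 - p) * ((p - 1) * uu lam p w ^ (p - 2))

def GG1 (lam p w : ℝ) : ℝ := (uu lam p w - w) / lam
def GG2 (lam p w : ℝ) : ℝ := ((DD lam p w)⁻¹ - 1) / lam
def GG3 (lam p w : ℝ) : ℝ :=
  lam ^ (2 - p) * (p - 1) * (p - 2) * uu lam p w ^ (p - 3) * ((DD lam p w)⁻¹) ^ 3 / lam

variable {lam p : ℝ}

lemma hh_lam (hlam : 0 < lam) : hh lam p lam = 0 := by
  rw [hh, ← Real.rpow_add hlam, show 2 - p + (p - 1) = 1 by ring, Real.rpow_one, sub_self]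

lemma hh_expand (hlam : 0 < lam) (hp : p < 1) {a b : ℝ} (ha : 0 < a) (hab : a ≤ b) :
    hh lam p a + (b - a) ≤ hh lam p b := by
  have key : b ^ (p - 1) ≤ a ^ (p - 1) :=
    Real.rpow_le_rpow_of_nonpos ha hab (by linarith)
  have c0 : (0 : ℝ) ≤ lam ^ (2 - p) := (Real.rpow_pos_of_pos hlam _).le
  have := mul_le_mul_of_nonneg_left key c0
  simp only [hh]; linarith

lemma hh_cont_at (hlam : 0 < lam) {x : ℝ} (hx : x ≠ 0) : ContinuousAt (hh lam p) x := by
  exact continuousAt_id.sub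
    (continuousAt_const.mul (Real.continuousAt_rpow_const x (p - 1) (Or.inl hx)))

lemma pshrink_eq (hlam : 0 < lam) (hp : p < 1) (t : ℝ) :
    pshrinkFun lam p t = if t ≤ lam then 0 else hh lam p t := by
  by_cases ht0 : t ≤ 0
  · rw [pshrinkFun, if_pos ht0, if_pos (ht0.trans hlam.le)]
  push_neg at ht0
  rw [pshrinkFun, if_neg (not_le.2 ht0)]
  have hsplit : t ^ (2 - p) * t ^ (p - 1) = t := by
    rw [← Real.rpow_add ht0, show 2 - p + (p - 1) = 1 by ring, Real.rpow_one]
  have hpw : (0 : ℝ) < t ^ (p - 1) := Real.rpow_pos_of_pos ht0 _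
  by_cases htl : t ≤ lam
  · rw [if_pos htl]
    apply max_eq_right
    have h2 : t ^ (2 - p) ≤ lam ^ (2 - p) := Real.rpow_le_rpow ht0.le htl (by linarith)
    nlinarith
  · rw [if_neg htl]
    push_neg at htl
    have h2 : lam ^ (2 - p) ≤ t ^ (2 - p) := Real.rpow_le_rpow hlam.le htl.le (by linarith)
    have : (0:ℝ) ≤ t - lam ^ (2 - p) * t ^ (p - 1) := by nlinarith
    rw [max_eq_left this]; rfl

lemma pshrink_cont (hlam : 0 < lam) (hp : p < 1) : Continuous (pshrinkFun lam p) := by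
  have heq : pshrinkFun lam p =
      fun t => if t ≤ lam then 0 else t - lam ^ (2 - p) * max t lam ^ (p - 1) := by
    funext t
    rw [pshrink_eq hlam hp]
    by_cases htl : t ≤ lam
    · rw [if_pos htl, if_pos htl]
    · push_neg at htl
      rw [if_neg (not_le.2 htl), if_neg (not_le.2 htl), hh, max_eq_left htl.le]
  rw [heq]
  apply Continuous.if_le
  · exact continuous_const
  · exact continuous_id.sub (continuous_const.mul
      ((continuous_id.max continuous_const).rpow_const fun x =>
        Or.inl (lt_of_lt_of_le hlam (le_max_right x lam)).ne'))
  · exact continuous_id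
  · exact continuous_const
  · intro x hx
    subst hx
    rw [max_self]
    have := hh_lam (p := p) hlam
    rw [hh] at this
    linarith

lemma pf_hasDeriv (hlam : 0 < lam) (hp : p < 1) (x : ℝ) :
    HasDerivAt (pf lam p) (pshrinkFun lam p x) x := by
  exact intervalIntegral.integral_hasDerivAt_right
    ((pshrink_cont hlam hp).intervalIntegrable _ _)
    ((pshrink_cont hlam hp).stronglyMeasurableAtFilter _ _)
    (pshrink_cont hlam hp).continuousAt

lemma uu_spec (hlam : 0 < lam) (hp : p < 1) {w : ℝ} (hw : 0 ≤ w) :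
    lam ≤ uu lam p w ∧ uu lam p w ≤ lam + w ∧ hh lam p (uu lam p w) = w := by
  have hcont : ContinuousOn (hh lam p) (Set.Icc lam (lam + w)) := fun x hx =>
    (hh_cont_at hlam (lt_of_lt_of_le hlam hx.1).ne').continuousWithinAt
  have hub : w ≤ hh lam p (lam + w) := by
    rcases eq_or_lt_of_le hw with h | h
    · rw [← h]; simpa using (hh_lam (p := p) hlam).symm.le
    · have := hh_expand hlam hp hlam (by linarith : lam ≤ lam + w)
      rw [hh_lam hlam] at this; linarith
  have hmem : w ∈ Set.Icc (hh lam p lam) (hh lam p (lam + w)) := by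
    rw [hh_lam hlam]; exact ⟨hw, hub⟩
  obtain ⟨x₀, hx₀mem, hx₀⟩ := intermediate_value_Icc (by linarith : lam ≤ lam + w) hcont hmem
  have hleast : IsLeast {x | lam ≤ x ∧ w ≤ hh lam p x} x₀ := by
    refine ⟨⟨hx₀mem.1, hx₀.ge⟩, fun x hx => ?_⟩
    by_contra hlt
    push_neg at hlt
    have := hh_expand hlam hp (lt_of_lt_of_le hlam hx.1) hlt.le
    rw [hx₀] at this
    have := hx.2
    linarith
  have huu : uu lam p w = x₀ := hleast.csInf_eq
  rw [huu]; exact ⟨hx₀mem.1, hx₀mem.2, hx₀⟩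

lemma uu_nonpos (hlam : 0 < lam) {w : ℝ} (hw : w ≤ 0) : uu lam p w = lam := by
  have : IsLeast {x | lam ≤ x ∧ w ≤ hh lam p x} lam :=
    ⟨⟨le_refl _, by rw [hh_lam hlam]; exact hw⟩, fun x hx => hx.1⟩
  exact this.csInf_eq

lemma uu_ge (hlam : 0 < lam) (hp : p < 1) (w : ℝ) : lam ≤ uu lam p w := by
  rcases le_or_gt w 0 with h | h
  · rw [uu_nonpos hlam h]
  · exact (uu_spec hlam hp h.le).1

lemma uu_pos (hlam : 0 < lam) (hp : p < 1) (w : ℝ) : 0 < uu lam p w :=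
  lt_of_lt_of_le hlam (uu_ge hlam hp w)

lemma uu_gt (hlam : 0 < lam) (hp : p < 1) {w : ℝ} (hw : 0 < w) : lam < uu lam p w := by
  rcases eq_or_lt_of_le (uu_ge hlam hp w) with h | h
  · exfalso
    have := (uu_spec hlam hp hw.le).2.2
    rw [← h, hh_lam hlam] at this
    linarith
  · exact h

lemma uu_mono (hlam : 0 < lam) (hp : p < 1) {a b : ℝ} (hab : a ≤ b) :
    uu lam p a ≤ uu lam p b ∧ uu lam p b - uu lam p a ≤ b - a := by
  rcases le_or_gt b 0 with hb | hb
  · rw [uu_nonpos hlam hb, uu_nonpos hlam (hab.trans hb)]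
    constructor <;> linarith
  rcases le_or_gt a 0 with ha | ha
  · rw [uu_nonpos hlam ha]
    have h1 := uu_ge hlam hp b
    have h2 := (uu_spec hlam hp hb.le).2.1
    constructor <;> linarith
  · have sa := uu_spec hlam hp ha.le
    have sb := uu_spec hlam hp hb.le
    have hmono : uu lam p a ≤ uu lam p b := by
      by_contra hlt
      push_neg at hlt
      have := hh_expand hlam hp (uu_pos hlam hp b) hlt.le
      rw [sa.2.2, sb.2.2] at this
      linarith
    refine ⟨hmono, ?_⟩
    rcases eq_or_lt_of_le hmono with h | h
    · rw [h]; linarith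
    · have := hh_expand hlam hp (uu_pos hlam hp a) h.le
      rw [sa.2.2, sb.2.2] at this
      linarith

lemma uu_lipschitz (hlam : 0 < lam) (hp : p < 1) : LipschitzWith 1 (uu lam p) := by
  apply LipschitzWith.of_dist_le_mul
  intro a b
  rw [Real.dist_eq, Real.dist_eq]
  simp only [NNReal.coe_one, one_mul]
  rcases le_total a b with hab | hab
  · have h := uu_mono hlam hp hab
    rw [abs_of_nonpos (by linarith), abs_of_nonpos (by linarith)]
    linarith
  · have h := uu_mono hlam hp hab
    rw [abs_of_nonneg (by linarith), abs_of_nonneg (by linarith)]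
    linarith

lemma DD_pos (hlam : 0 < lam) (hp : p < 1) (w : ℝ) : 0 < DD lam p w := by
  have c0 : (0 : ℝ) < lam ^ (2 - p) := Real.rpow_pos_of_pos hlam _
  have u0 : (0 : ℝ) < uu lam p w ^ (p - 2) :=
    Real.rpow_pos_of_pos (uu_pos hlam hp w) _
  have h1p : (0:ℝ) < 1 - p := by linarith
  rw [DD]
  nlinarith [mul_pos (mul_pos c0 u0) h1p]

lemma hh_hasDeriv (hlam : 0 < lam) {x : ℝ} (hx : 0 < x) :
    HasDerivAt (hh lam p) (1 - lam ^ (2 - p) * ((p - 1) * x ^ (p - 2))) x := by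
  have h1 : HasDerivAt (fun x : ℝ => x ^ (p - 1)) ((p - 1) * x ^ (p - 1 - 1)) x :=
    Real.hasDerivAt_rpow_const (Or.inl hx.ne')
  have h2 := (h1.const_mul (lam ^ (2 - p)))
  have h3 := (hasDerivAt_id x).sub h2
  rw [show p - 1 - 1 = p - 2 by ring] at h3
  exact h3

lemma uu_hasDeriv (hlam : 0 < lam) (hp : p < 1) {w : ℝ} (hw : 0 < w) :
    HasDerivAt (uu lam p) (DD lam p w)⁻¹ w := by
  apply HasDerivAt.of_local_left_inverse
    ((uu_lipschitz hlam hp).continuous.continuousAt)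
    (hh_hasDeriv hlam (uu_pos hlam hp w))
    (DD_pos hlam hp w).ne'
  filter_upwards [Ioi_mem_nhds hw] with y hy
  exact (uu_spec hlam hp (le_of_lt hy)).2.2


lemma phi_hasDeriv (hlam : 0 < lam) (hp : p < 1) (w x : ℝ) :
    HasDerivAt (fun x => x * w - pf lam p x) (w - pshrinkFun lam p x) x := by
  have h := ((hasDerivAt_id x).mul_const w).sub (pf_hasDeriv hlam hp x)
  rw [one_mul] at h; exact h

lemma pfstar_eq (hlam : 0 < lam) (hp : p < 1) {w : ℝ} (hw : 0 < w) :
    pfstar lam p w = uu lam p w * w - pf lam p (uu lam p w) := by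
  have hspec := uu_spec hlam hp hw.le
  have hugt := uu_gt hlam hp hw
  have hdiff : Differentiable ℝ (fun x => x * w - pf lam p x) := fun x =>
    (phi_hasDeriv hlam hp w x).differentiableAt
  have hderiv : ∀ x, deriv (fun x => x * w - pf lam p x) x = w - pshrinkFun lam p x := fun x =>
    (phi_hasDeriv hlam hp w x).deriv
  have hmono : MonotoneOn (fun x => x * w - pf lam p x) (Set.Icc 0 (uu lam p w)) := by
    apply monotoneOn_of_deriv_nonneg (convex_Icc _ _) hdiff.continuous.continuousOn
      hdiff.differentiableOn
    intro x hx
    rw [interior_Icc] at hx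
    rw [hderiv, pshrink_eq hlam hp]
    by_cases hxl : x ≤ lam
    · rw [if_pos hxl]; linarith
    · rw [if_neg hxl]; push_neg at hxl
      have := hh_expand hlam hp (hlam.trans hxl) hx.2.le
      rw [hspec.2.2] at this
      have hxu := hx.2
      linarith
  have hanti : AntitoneOn (fun x => x * w - pf lam p x) (Set.Ici (uu lam p w)) := by
    apply antitoneOn_of_deriv_nonpos (convex_Ici _) hdiff.continuous.continuousOn
      hdiff.differentiableOn
    intro x hx
    rw [interior_Ici] at hx
    rw [hderiv, pshrink_eq hlam hp, if_neg (not_le.2 (hugt.trans hx))]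
    have hx' : uu lam p w < x := hx
    have := hh_expand hlam hp (uu_pos hlam hp w) hx'.le
    rw [hspec.2.2] at this
    linarith
  have hgr : IsGreatest ((fun x => x * w - pf lam p x) '' Set.Ici 0)
      (uu lam p w * w - pf lam p (uu lam p w)) := by
    constructor
    · exact ⟨uu lam p w, (uu_pos hlam hp w).le, rfl⟩
    · rintro y ⟨x, hx, rfl⟩
      rcases le_total x (uu lam p w) with hxu | hux
      · exact hmono ⟨hx, hxu⟩ ⟨(uu_pos hlam hp w).le, le_refl _⟩ hxu
      · exact hanti Set.self_mem_Ici (Set.mem_Ici.2 hux) hux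
  rw [pfstar, hgr.csSup_eq]

lemma gp_eq (hlam : 0 < lam) (hp : p < 1) {w : ℝ} (hw : 0 < w) :
    gp lam p w = (uu lam p w * w - pf lam p (uu lam p w) - w ^ 2 / 2) / lam := by
  rw [gp, abs_of_pos hw, pfstar_eq hlam hp hw]

lemma pshrink_uu (hlam : 0 < lam) (hp : p < 1) {w : ℝ} (hw : 0 < w) :
    pshrinkFun lam p (uu lam p w) = w := by
  rw [pshrink_eq hlam hp, if_neg (not_le.2 (uu_gt hlam hp hw))]
  exact (uu_spec hlam hp hw.le).2.2

lemma gp_hasDeriv (hlam : 0 < lam) (hp : p < 1) {w : ℝ} (hw : 0 < w) :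
    HasDerivAt (gp lam p) (GG1 lam p w) w := by
  have hu := uu_hasDeriv hlam hp hw
  have hA : HasDerivAt (fun y => uu lam p y * y) ((DD lam p w)⁻¹ * w + uu lam p w * 1) w :=
    hu.mul (hasDerivAt_id w)
  have hB : HasDerivAt (fun y => pf lam p (uu lam p y))
      (pshrinkFun lam p (uu lam p w) * (DD lam p w)⁻¹) w :=
    (pf_hasDeriv hlam hp (uu lam p w)).comp w hu
  have hC : HasDerivAt (fun y : ℝ => y ^ 2 / 2) w w := by
    simpa using (hasDerivAt_pow 2 w).div_const 2
  have hG := ((hA.sub hB).sub hC).div_const lam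
  have hval : ((DD lam p w)⁻¹ * w + uu lam p w * 1 -
      pshrinkFun lam p (uu lam p w) * (DD lam p w)⁻¹ - w) / lam = GG1 lam p w := by
    rw [pshrink_uu hlam hp hw, GG1]; ring
  rw [hval] at hG
  exact hG.congr_of_eventuallyEq
    (by filter_upwards [Ioi_mem_nhds hw] with y hy; exact gp_eq hlam hp hy)

lemma g1_hasDeriv (hlam : 0 < lam) (hp : p < 1) {w : ℝ} (hw : 0 < w) :
    HasDerivAt (GG1 lam p) (GG2 lam p w) w := by
  have h := ((uu_hasDeriv hlam hp hw).sub (hasDerivAt_id w)).div_const lam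
  exact h

lemma g2_hasDeriv (hlam : 0 < lam) (hp : p < 1) {w : ℝ} (hw : 0 < w) :
    HasDerivAt (GG2 lam p) (GG3 lam p w) w := by
  have hu := uu_hasDeriv hlam hp hw
  have hr : HasDerivAt (fun y => uu lam p y ^ (p - 2))
      ((DD lam p w)⁻¹ * (p - 2) * uu lam p w ^ (p - 3)) w := by
    have := hu.rpow_const (p := p - 2) (Or.inl (uu_pos hlam hp w).ne')
    rwa [show p - 2 - 1 = p - 3 by ring] at this
  have hD : HasDerivAt (DD lam p)
      (-(lam ^ (2 - p) * ((p - 1) * ((DD lam p w)⁻¹ * (p - 2) * uu lam p w ^ (p - 3))))) w :=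
    HasDerivAt.const_sub 1 ((hr.const_mul (p - 1)).const_mul (lam ^ (2 - p)))
  have hinv := hD.inv (DD_pos hlam hp w).ne'
  have h := (hinv.sub_const 1).div_const lam
  have hDD := (DD_pos hlam hp w).ne'
  have hval : -(-(lam ^ (2 - p) * ((p - 1) * ((DD lam p w)⁻¹ * (p - 2) * uu lam p w ^ (p - 3)))))
      / DD lam p w ^ 2 / lam = GG3 lam p w := by
    rw [GG3]
    field_simp
  rwa [hval] at h


end Stmt16Aux

open Stmt16Aux

/-- sign of the third derivative of `g_p`. -/
theorem stmt16 (lam p : ℝ) (hlam : 0 < lam) (hp : p < 1) :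
    (∀ w : ℝ, w ≠ 0 → DifferentiableAt ℝ (iteratedDeriv 2 (gp lam p)) w) ∧
    (∀ w : ℝ, 0 < w → 0 < iteratedDeriv 3 (gp lam p) w) ∧
    (∀ w : ℝ, w < 0 → iteratedDeriv 3 (gp lam p) w < 0) ∧
    (∃ L : ℝ, 0 < L ∧ Filter.Tendsto (iteratedDeriv 3 (gp lam p))
      (nhdsWithin 0 (Set.Ioi 0)) (nhds L)) ∧
    (∃ L' : ℝ, L' < 0 ∧ Filter.Tendsto (iteratedDeriv 3 (gp lam p))
      (nhdsWithin 0 (Set.Iio 0)) (nhds L')) := by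
  have hEq1 : ∀ w : ℝ, 0 < w → deriv (gp lam p) w = GG1 lam p w := fun w hw =>
    (gp_hasDeriv hlam hp hw).deriv
  have hev1 : ∀ w : ℝ, 0 < w → deriv (gp lam p) =ᶠ[nhds w] GG1 lam p := fun w hw => by
    filter_upwards [Ioi_mem_nhds hw] with y hy; exact hEq1 y hy
  have hD2 : ∀ w : ℝ, 0 < w → HasDerivAt (deriv (gp lam p)) (GG2 lam p w) w := fun w hw =>
    (g1_hasDeriv hlam hp hw).congr_of_eventuallyEq (hev1 w hw)
  have hEq2 : ∀ w : ℝ, 0 < w → iteratedDeriv 2 (gp lam p) w = GG2 lam p w := fun w hw => by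
    rw [show (2 : ℕ) = 1 + 1 from rfl, iteratedDeriv_succ, iteratedDeriv_one]
    exact (hD2 w hw).deriv
  have hev2 : ∀ w : ℝ, 0 < w → iteratedDeriv 2 (gp lam p) =ᶠ[nhds w] GG2 lam p := fun w hw => by
    filter_upwards [Ioi_mem_nhds hw] with y hy; exact hEq2 y hy
  have hD3 : ∀ w : ℝ, 0 < w → HasDerivAt (iteratedDeriv 2 (gp lam p)) (GG3 lam p w) w :=
    fun w hw => (g2_hasDeriv hlam hp hw).congr_of_eventuallyEq (hev2 w hw)
  have hEq3 : ∀ w : ℝ, 0 < w → iteratedDeriv 3 (gp lam p) w = GG3 lam p w := fun w hw => by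
    rw [show (3 : ℕ) = 2 + 1 from rfl, iteratedDeriv_succ]
    exact (hD3 w hw).deriv
  have heven : ∀ x : ℝ, gp lam p (-x) = gp lam p x := fun x => by
    simp only [gp, abs_neg, neg_sq]
  have hfe : ∀ n : ℕ, ∀ x : ℝ,
      iteratedDeriv n (gp lam p) x = (-1 : ℝ) ^ n • iteratedDeriv n (gp lam p) (-x) := by
    intro n x
    conv_lhs => rw [show gp lam p = fun y => gp lam p (-y) from funext fun y => (heven y).symm]
    exact iteratedDeriv_comp_neg n (gp lam p) x
  have hfe2 : ∀ x : ℝ, iteratedDeriv 2 (gp lam p) x = iteratedDeriv 2 (gp lam p) (-x) :=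
    fun x => by simpa using hfe 2 x
  have hfe3 : ∀ x : ℝ, iteratedDeriv 3 (gp lam p) x = -iteratedDeriv 3 (gp lam p) (-x) := by
    intro x
    have := hfe 3 x
    rwa [show ((-1 : ℝ)) ^ 3 = -1 by norm_num, neg_smul, one_smul] at this
  have hG3pos : ∀ w : ℝ, 0 < GG3 lam p w := by
    intro w
    have c0 : (0 : ℝ) < lam ^ (2 - p) := Real.rpow_pos_of_pos hlam _
    have u0 : (0 : ℝ) < uu lam p w ^ (p - 3) := Real.rpow_pos_of_pos (uu_pos hlam hp w) _
    have d0 : (0 : ℝ) < ((DD lam p w)⁻¹) ^ 3 := pow_pos (inv_pos.2 (DD_pos hlam hp w)) 3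
    have hpp : (0 : ℝ) < (p - 1) * (p - 2) := by nlinarith
    rw [GG3]
    have hnum : (0 : ℝ) < lam ^ (2 - p) * (p - 1) * (p - 2) * uu lam p w ^ (p - 3) *
        ((DD lam p w)⁻¹) ^ 3 := by
      nlinarith [mul_pos (mul_pos (mul_pos c0 hpp) u0) d0]
    exact div_pos hnum hlam
  have hcont : ContinuousAt (GG3 lam p) 0 := by
    have hu : ContinuousAt (uu lam p) 0 := (uu_lipschitz hlam hp).continuous.continuousAt
    have h1 : ContinuousAt (fun w => uu lam p w ^ (p - 3)) 0 :=
      hu.rpow_const (Or.inl (uu_pos hlam hp 0).ne')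
    have h2 : ContinuousAt (fun w => uu lam p w ^ (p - 2)) 0 :=
      hu.rpow_const (Or.inl (uu_pos hlam hp 0).ne')
    have hd : ContinuousAt (DD lam p) 0 :=
      continuousAt_const.sub (continuousAt_const.mul (continuousAt_const.mul h2))
    have hdi : ContinuousAt (fun w => ((DD lam p w)⁻¹) ^ 3) 0 :=
      (hd.inv₀ (DD_pos hlam hp 0).ne').pow 3
    exact ((continuousAt_const.mul h1).mul hdi).div_const lam
  have hright : Filter.Tendsto (iteratedDeriv 3 (gp lam p))
      (nhdsWithin 0 (Set.Ioi 0)) (nhds (GG3 lam p 0)) := by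
    refine Filter.Tendsto.congr' ?_ hcont.continuousWithinAt
    filter_upwards [self_mem_nhdsWithin] with y hy
    exact (hEq3 y hy).symm
  refine ⟨?_, ?_, ?_, ?_, ?_⟩
  · intro w hw
    rcases hw.lt_or_gt with hneg | hpos
    · have hd : DifferentiableAt ℝ (iteratedDeriv 2 (gp lam p)) (-w) :=
        (hD3 (-w) (by linarith)).differentiableAt
      have hcomp : DifferentiableAt ℝ (fun x : ℝ => iteratedDeriv 2 (gp lam p) (-x)) w :=
        DifferentiableAt.comp w hd differentiable_neg.differentiableAt
      exact hcomp.congr_of_eventuallyEq (Filter.Eventually.of_forall fun x => hfe2 x)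
    · exact (hD3 w hpos).differentiableAt
  · intro w hw
    rw [hEq3 w hw]; exact hG3pos w
  · intro w hw
    rw [hfe3 w, hEq3 (-w) (by linarith)]
    have := hG3pos (-w); linarith
  · exact ⟨GG3 lam p 0, hG3pos 0, hright⟩
  · refine ⟨-(GG3 lam p 0), by linarith [hG3pos 0], ?_⟩
    have hnegmap : Filter.Tendsto (fun x : ℝ => -x)
        (nhdsWithin 0 (Set.Iio 0)) (nhdsWithin 0 (Set.Ioi 0)) := by
      apply tendsto_nhdsWithin_of_tendsto_nhds_of_eventually_within
      · simpa using (continuous_neg.tendsto (0 : ℝ)).mono_left nhdsWithin_le_nhds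
      · filter_upwards [self_mem_nhdsWithin] with y hy
        simpa using hy
    have hcompL := (hright.comp hnegmap).neg
    exact hcompL.congr fun x => (hfe3 x).symm


end
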